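/- Let U₀ ⊆ ℝ^n be a nonempty compact set, A ∈ ℝ^{n×n}, t ≥ 0, and let η ≥ 1 be an integer. For Δt > 0 set Ã_i = A^i·Δt^{i+1}/(i+1)!, D(Δt) = { Δt·M·u : M ∈ ℝ^{n×n} with |M| ≤ E(Δt,η) entrywise, u ∈ U₀ }, P̂(Δt) = Ã_0·U₀ ⊕ Ã_1·U₀ ⊕ … ⊕ Ã_η·U₀ ⊕ D(Δt), and define ε_U(Δt) = err( e^{A·t}·P̂(Δt) ). Then ε_U(Δt) → 0 as Δt → 0⁺ and ε_U(Δt) = O(Δt) as Δt → 0⁺, i.e., there exist constants c > 0 and δ > 0 with ε_U(Δt) ≤ c·Δt for all Δt ∈ (0,δ). -/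

import Mathlib

open scoped Pointwise

/-- Matrix exponential. -/
noncomputable def mexp {n : ℕ} (A : Matrix (Fin n) (Fin n) ℝ) : Matrix (Fin n) (Fin n) ℝ :=
  NormedSpace.exp A

/-- Matrix-vector multiplication on Euclidean space. -/
noncomputable def mvE {m n : ℕ} (M : Matrix (Fin m) (Fin n) ℝ)
    (x : EuclideanSpace ℝ (Fin n)) : EuclideanSpace ℝ (Fin m) :=
  Matrix.toEuclideanLin M x

/-- Image of a set under a matrix: M·S = {M·s : s ∈ S}. -/
noncomputable def imgM {m n : ℕ} (M : Matrix (Fin m) (Fin n) ℝ)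
    (S : Set (EuclideanSpace ℝ (Fin n))) : Set (EuclideanSpace ℝ (Fin m)) :=
  mvE M '' S

/-- Zonotope with center `c` and generator matrix `G`. -/
noncomputable def zono {n p : ℕ} (c : EuclideanSpace ℝ (Fin n))
    (G : Matrix (Fin n) (Fin p) ℝ) : Set (EuclideanSpace ℝ (Fin n)) :=
  {x | ∃ α : EuclideanSpace ℝ (Fin p), (∀ i, α i ∈ Set.Icc (-1 : ℝ) 1) ∧ x = c + mvE G α}

/-- Linear combination of two sets. -/
def linComb {n : ℕ} (S1 S2 : Set (EuclideanSpace ℝ (Fin n))) :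
    Set (EuclideanSpace ℝ (Fin n)) :=
  {x | ∃ s1 ∈ S1, ∃ s2 ∈ S2, ∃ lam ∈ Set.Icc (0 : ℝ) 1, x = lam • s1 + (1 - lam) • s2}

/-- Tightest axis-aligned interval enclosure of a set. -/
noncomputable def box {n : ℕ} (S : Set (EuclideanSpace ℝ (Fin n))) :
    Set (EuclideanSpace ℝ (Fin n)) :=
  {x | ∀ i, x i ∈ Set.Icc (sInf ((fun y => y i) '' S)) (sSup ((fun y => y i) '' S))}

/-- Radius of the smallest origin-centered enclosing hypersphere. -/
noncomputable def rad {n : ℕ} (S : Set (EuclideanSpace ℝ (Fin n))) : ℝ :=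
  sSup ((fun x => ‖x‖) '' S)

/-- err(S) = rad(box(S)). -/
noncomputable def err {n : ℕ} (S : Set (EuclideanSpace ℝ (Fin n))) : ℝ := rad (box S)

/-- Spectral norm (operator 2-norm) of a matrix. -/
noncomputable def specNorm {m n : ℕ} (M : Matrix (Fin m) (Fin n) ℝ) : ℝ :=
  ‖LinearMap.toContinuousLinearMap (Matrix.toEuclideanLin M)‖

/-- Particular solution set P_U(t). -/
noncomputable def PU {n : ℕ} (U0 : Set (EuclideanSpace ℝ (Fin n)))
    (A : Matrix (Fin n) (Fin n) ℝ) (t : ℝ) : Set (EuclideanSpace ℝ (Fin n)) :=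
  {x | ∃ u : ℝ → EuclideanSpace ℝ (Fin n), Measurable u ∧ (∀ θ ∈ Set.Icc 0 t, u θ ∈ U0) ∧
    x = ∫ θ in (0 : ℝ)..t, mvE (mexp ((t - θ) • A)) (u θ)}

/-- Entrywise integral ∫₀^t e^{A·σ} dσ of the matrix exponential. -/
noncomputable def intExp {n : ℕ} (A : Matrix (Fin n) (Fin n) ℝ) (t : ℝ) :
    Matrix (Fin n) (Fin n) ℝ :=
  Matrix.of fun i j => ∫ σ in (0 : ℝ)..t, mexp (σ • A) i j

/-- Entrywise absolute value of a matrix. -/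
def entAbs {m n : ℕ} (M : Matrix (Fin m) (Fin n) ℝ) : Matrix (Fin m) (Fin n) ℝ :=
  Matrix.of fun i j => |M i j|

/-- Exponential remainder matrix E(Δt,η). -/
noncomputable def Eexp {n : ℕ} (A : Matrix (Fin n) (Fin n) ℝ) (dt : ℝ) (η : ℕ) :
    Matrix (Fin n) (Fin n) ℝ :=
  mexp (dt • entAbs A) -
    ∑ i ∈ Finset.range (η + 1), ((Nat.factorial i : ℝ)⁻¹) • (dt • entAbs A) ^ i

/-- Ã_i = A^i·Δt^{i+1}/(i+1)!. -/
noncomputable def Atilde {n : ℕ} (A : Matrix (Fin n) (Fin n) ℝ) (dt : ℝ) (i : ℕ) :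
    Matrix (Fin n) (Fin n) ℝ :=
  (dt ^ (i + 1) / (Nat.factorial (i + 1) : ℝ)) • A ^ i

/-- D(Δt) = {Δt·M·u : |M| ≤ E(Δt,η) entrywise, u ∈ U₀}. -/
noncomputable def Dset {n : ℕ} (A : Matrix (Fin n) (Fin n) ℝ) (dt : ℝ) (η : ℕ)
    (U0 : Set (EuclideanSpace ℝ (Fin n))) : Set (EuclideanSpace ℝ (Fin n)) :=
  {x | ∃ M : Matrix (Fin n) (Fin n) ℝ, (∀ i j, |M i j| ≤ Eexp A dt η i j) ∧
    ∃ u ∈ U0, x = dt • mvE M u}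

/-- P̂(Δt) = Ã_0·U₀ ⊕ … ⊕ Ã_η·U₀ ⊕ D(Δt). -/
noncomputable def PhatSet {n : ℕ} (A : Matrix (Fin n) (Fin n) ℝ) (dt : ℝ) (η : ℕ)
    (U0 : Set (EuclideanSpace ℝ (Fin n))) : Set (EuclideanSpace ℝ (Fin n)) :=
  (∑ i ∈ Finset.range (η + 1), imgM (Atilde A dt i) U0) + Dset A dt η U0

/-- One-step accumulating error bound ε̂(Δt). -/
noncomputable def ehatStep {n : ℕ} (A : Matrix (Fin n) (Fin n) ℝ) (t : ℝ) (η : ℕ)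
    (U0 : Set (EuclideanSpace ℝ (Fin n))) (dt : ℝ) : ℝ :=
  err (imgM (mexp (t • A)) (imgM (∑ i ∈ Finset.Icc 1 η, Atilde A dt i) U0 + Dset A dt η U0)) +
  err (imgM (mexp (t • A)) ((∑ i ∈ Finset.Icc 1 η, imgM (Atilde A dt i) U0) + Dset A dt η U0))

/-- Scalar interval I_i(Δt). -/
noncomputable def Iint (i : ℕ) (dt : ℝ) : Set ℝ :=
  Set.Icc (((i : ℝ) ^ (-(i : ℝ) / ((i : ℝ) - 1)) - (i : ℝ) ^ (-(1 : ℝ) / ((i : ℝ) - 1))) * dt ^ i) 0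

/-- Interval matrix F_x(Δt). -/
noncomputable def Fx {n : ℕ} (A : Matrix (Fin n) (Fin n) ℝ) (η : ℕ) (dt : ℝ) :
    Set (Matrix (Fin n) (Fin n) ℝ) :=
  {M | ∃ τ : ℕ → ℝ, (∀ i ∈ Finset.Icc 2 η, τ i ∈ Iint i dt) ∧
    ∃ R : Matrix (Fin n) (Fin n) ℝ, (∀ i j, |R i j| ≤ Eexp A dt η i j) ∧
    M = (∑ i ∈ Finset.Icc 2 η, (τ i / (Nat.factorial i : ℝ)) • A ^ i) + R}

/-- Interval matrix F_u(Δt). -/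
noncomputable def Fu {n : ℕ} (A : Matrix (Fin n) (Fin n) ℝ) (η : ℕ) (dt : ℝ) :
    Set (Matrix (Fin n) (Fin n) ℝ) :=
  {N | ∃ τ : ℕ → ℝ, (∀ i ∈ Finset.Icc 2 (η + 1), τ i ∈ Iint i dt) ∧
    ∃ R : Matrix (Fin n) (Fin n) ℝ, (∀ i j, |R i j| ≤ Eexp A dt η i j) ∧
    N = (∑ i ∈ Finset.Icc 2 (η + 1), (τ i / (Nat.factorial i : ℝ)) • A ^ (i - 1)) + dt • R}

/-- Curvature enclosure set C(Δt). -/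
noncomputable def Cset {n p : ℕ} (A : Matrix (Fin n) (Fin n) ℝ) (η : ℕ) (dt : ℝ)
    (ch : EuclideanSpace ℝ (Fin n)) (Gh : Matrix (Fin n) (Fin p) ℝ)
    (utld : EuclideanSpace ℝ (Fin n)) : Set (EuclideanSpace ℝ (Fin n)) :=
  {y | ∃ M ∈ Fx A η dt, ∃ N ∈ Fu A η dt, ∃ x ∈ zono ch Gh, y = mvE M x + mvE N utld}

/-- ε_hom(Δt). -/
noncomputable def ehom {n p : ℕ} (A : Matrix (Fin n) (Fin n) ℝ) (η : ℕ)
    (ch : EuclideanSpace ℝ (Fin n)) (Gh : Matrix (Fin n) (Fin p) ℝ)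
    (utld : EuclideanSpace ℝ (Fin n)) (dt : ℝ) : ℝ :=
  2 * err (Cset A η dt ch Gh utld) + Real.sqrt p * specNorm ((mexp (dt • A) - 1) * Gh)

/-- ε_U(Δt) = err(e^{A·t}·P̂(Δt)). -/
noncomputable def errPhat {n : ℕ} (A : Matrix (Fin n) (Fin n) ℝ) (t : ℝ) (η : ℕ)
    (U0 : Set (EuclideanSpace ℝ (Fin n))) (dt : ℝ) : ℝ :=
  err (imgM (mexp (t • A)) (PhatSet A dt η U0))

/-! ### Auxiliary lemmas -/

lemma abs_apply_le_norm' {n : ℕ} (x : EuclideanSpace ℝ (Fin n)) (i : Fin n) : |x i| ≤ ‖x‖ := by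
  calc |x i| = Real.sqrt (‖x i‖ ^ 2) := by
        rw [Real.sqrt_sq (norm_nonneg _), Real.norm_eq_abs]
    _ ≤ Real.sqrt (∑ j, ‖x j‖ ^ 2) :=
        Real.sqrt_le_sqrt (Finset.single_le_sum (f := fun j => ‖x j‖ ^ 2)
          (fun j _ => sq_nonneg _) (Finset.mem_univ i))
    _ = ‖x‖ := (EuclideanSpace.norm_eq x).symm

lemma norm_le_sqrt_mul' {n : ℕ} (x : EuclideanSpace ℝ (Fin n)) {r : ℝ} (hr : 0 ≤ r)
    (h : ∀ i, |x i| ≤ r) : ‖x‖ ≤ Real.sqrt n * r := by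
  rw [EuclideanSpace.norm_eq]
  have h1 : ∑ i, ‖x i‖ ^ 2 ≤ ∑ _i : Fin n, r ^ 2 :=
    Finset.sum_le_sum fun i _ => by
      rw [Real.norm_eq_abs]
      exact pow_le_pow_left₀ (abs_nonneg _) (h i) 2
  calc Real.sqrt (∑ i, ‖x i‖ ^ 2) ≤ Real.sqrt (∑ _i : Fin n, r ^ 2) := Real.sqrt_le_sqrt h1
    _ = Real.sqrt ((n : ℝ) * r ^ 2) := by
        rw [Finset.sum_const, Finset.card_univ, Fintype.card_fin, nsmul_eq_mul]
    _ = Real.sqrt n * r := by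
        rw [Real.sqrt_mul (by positivity), Real.sqrt_sq hr]

lemma mvE_norm_le' {n : ℕ} (M : Matrix (Fin n) (Fin n) ℝ) (u : EuclideanSpace ℝ (Fin n)) {K : ℝ}
    (hK : 0 ≤ K) (h : ∀ i j, |M i j| ≤ K) : ‖mvE M u‖ ≤ Real.sqrt n * ((n : ℝ) * K * ‖u‖) := by
  apply norm_le_sqrt_mul' _ (by positivity)
  intro i
  have hco : mvE M u i = ∑ j, M i j * u j := rfl
  rw [hco]
  calc |∑ j, M i j * u j| ≤ ∑ j, |M i j * u j| := Finset.abs_sum_le_sum_abs _ _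
    _ ≤ ∑ _j : Fin n, K * ‖u‖ := Finset.sum_le_sum fun j _ => by
        rw [abs_mul]
        exact mul_le_mul (h i j) (abs_apply_le_norm' u j) (abs_nonneg _) hK
    _ = (n : ℝ) * K * ‖u‖ := by
        rw [Finset.sum_const, Finset.card_univ, Fintype.card_fin, nsmul_eq_mul]; ring

lemma norm_sum_sets_le' {n : ℕ} {ι : Type*} (s : Finset ι)
    (S : ι → Set (EuclideanSpace ℝ (Fin n))) (b : ι → ℝ)
    (h : ∀ i ∈ s, ∀ x ∈ S i, ‖x‖ ≤ b i) : ∀ x ∈ ∑ i ∈ s, S i, ‖x‖ ≤ ∑ i ∈ s, b i := by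
  classical
  induction s using Finset.induction_on with
  | empty =>
      intro x hx
      simp only [Finset.sum_empty] at hx ⊢
      rw [Set.mem_zero.mp hx]; simp
  | @insert a s ha ih =>
      rw [Finset.sum_insert ha, Finset.sum_insert ha]
      intro x hx
      rcases Set.mem_add.mp hx with ⟨y, hy, z, hz, rfl⟩
      have h1 := h a (Finset.mem_insert_self a s) y hy
      have h2 := ih (fun i hi => h i (Finset.mem_insert_of_mem hi)) z hz
      calc ‖y + z‖ ≤ ‖y‖ + ‖z‖ := norm_add_le _ _
        _ ≤ _ := add_le_add h1 h2

lemma entry_le_entSum' {n : ℕ} (M : Matrix (Fin n) (Fin n) ℝ) (i j : Fin n) :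
    |M i j| ≤ ∑ i', ∑ j', |M i' j'| :=
  le_trans
    (Finset.single_le_sum (f := fun j' => |M i j'|) (fun j' _ => abs_nonneg _) (Finset.mem_univ j))
    (Finset.single_le_sum (f := fun i' => ∑ j', |M i' j'|)
      (fun i' _ => Finset.sum_nonneg fun _ _ => abs_nonneg _) (Finset.mem_univ i))

lemma exists_Eexp_bound' {n : ℕ} (A : Matrix (Fin n) (Fin n) ℝ) (η : ℕ) :
    ∃ K, 0 ≤ K ∧ ∀ dt ∈ Set.Icc (0:ℝ) 1, ∀ i j, Eexp A dt η i j ≤ K := by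
  have hexpc : Continuous (NormedSpace.exp : Matrix (Fin n) (Fin n) ℝ → _) := by
    letI := Matrix.linftyOpNormedRing (α := ℝ) (n := Fin n)
    letI := Matrix.linftyOpNormedAlgebra (α := ℝ) (n := Fin n) (R := ℝ)
    letI : NormedAlgebra ℚ (Matrix (Fin n) (Fin n) ℝ) := NormedAlgebra.restrictScalars ℚ ℝ _
    exact NormedSpace.exp_continuous
  have hcont : ∀ i j, Continuous (fun dt : ℝ => Eexp A dt η i j) := by
    intro i j
    have h1 : Continuous (fun dt : ℝ => mexp (dt • entAbs A) i j) :=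
      (continuous_apply j).comp ((continuous_apply i).comp
        (hexpc.comp (continuous_id.smul continuous_const)))
    have h2 : Continuous (fun dt : ℝ =>
        (∑ k ∈ Finset.range (η + 1), ((Nat.factorial k : ℝ)⁻¹) • (dt • entAbs A) ^ k) i j) := by
      simp only [Matrix.sum_apply, smul_pow, Matrix.smul_apply, smul_eq_mul]
      apply continuous_finset_sum
      intro k _
      exact continuous_const.mul ((continuous_pow k).mul continuous_const)
    have he : (fun dt : ℝ => Eexp A dt η i j) = fun dt =>
        mexp (dt • entAbs A) i j -
        (∑ k ∈ Finset.range (η + 1), ((Nat.factorial k : ℝ)⁻¹) • (dt • entAbs A) ^ k) i j := by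
      funext dt; rfl
    rw [he]
    exact h1.sub h2
  have hg : Continuous (fun dt : ℝ => ∑ i, ∑ j, |Eexp A dt η i j|) := by
    apply continuous_finset_sum; intro i _
    apply continuous_finset_sum; intro j _
    exact (hcont i j).abs
  obtain ⟨C, hC⟩ := isCompact_Icc.exists_bound_of_continuousOn
    (f := fun dt : ℝ => ∑ i, ∑ j, |Eexp A dt η i j|) hg.continuousOn
  refine ⟨max C 0, le_max_right _ _, fun dt hdt i j => ?_⟩
  have h1 : |Eexp A dt η i j| ≤ ∑ i', ∑ j', |Eexp A dt η i' j'| := entry_le_entSum' _ i j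
  have h2 := hC dt hdt
  rw [Real.norm_eq_abs] at h2
  exact le_trans (le_abs_self _)
    (le_trans h1 (le_trans (le_abs_self _) (le_trans h2 (le_max_left _ _))))

lemma err_nonneg' {n : ℕ} (S : Set (EuclideanSpace ℝ (Fin n))) : 0 ≤ err S := by
  unfold err rad
  exact Real.sSup_nonneg (by rintro y ⟨x, -, rfl⟩; exact norm_nonneg x)

lemma err_le_of_bound' {n : ℕ} {S : Set (EuclideanSpace ℝ (Fin n))} {r : ℝ} (hr : 0 ≤ r)
    (h : ∀ y ∈ S, ‖y‖ ≤ r) : err S ≤ Real.sqrt n * r := by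
  unfold err rad
  apply Real.sSup_le _ (by positivity)
  rintro w ⟨x, hx, rfl⟩
  apply norm_le_sqrt_mul' x hr
  intro i
  have hx' := hx i
  rw [abs_le]
  refine ⟨?_, ?_⟩
  · refine le_trans ?_ hx'.1
    rcases ((fun y => y i) '' S).eq_empty_or_nonempty with he | hne'
    · rw [he, Real.sInf_empty]; linarith
    · apply le_csInf hne'
      rintro b ⟨y, hy, rfl⟩
      have h2 : |y i| ≤ r := le_trans (abs_apply_le_norm' y i) (h y hy)
      linarith [(abs_le.mp h2).1]
  · refine le_trans hx'.2 ?_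
    apply Real.sSup_le _ hr
    rintro b ⟨y, hy, rfl⟩
    exact le_trans (le_abs_self _) (le_trans (abs_apply_le_norm' y i) (h y hy))

/-- the error `ε_U(Δt) = err(e^{A·t}·P̂(Δt))` tends to 0 and is `O(Δt)`. -/
theorem errPhat_limit_and_order {n : ℕ} (U0 : Set (EuclideanSpace ℝ (Fin n)))
    (hne : U0.Nonempty) (hcomp : IsCompact U0) (A : Matrix (Fin n) (Fin n) ℝ)
    (t : ℝ) (ht : 0 ≤ t) (η : ℕ) (hη : 1 ≤ η) :
    Filter.Tendsto (fun dt => errPhat A t η U0 dt)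
      (nhdsWithin 0 (Set.Ioi 0)) (nhds 0) ∧
    ∃ c > (0 : ℝ), ∃ δ > (0 : ℝ), ∀ dt ∈ Set.Ioo (0 : ℝ) δ,
      errPhat A t η U0 dt ≤ c * dt := by
  classical
  obtain ⟨r0, hr0⟩ := hcomp.isBounded.subset_closedBall 0
  set KU := max r0 0 with hKUdef
  have hKU0 : (0:ℝ) ≤ KU := le_max_right _ _
  have hKU : ∀ u ∈ U0, ‖u‖ ≤ KU := fun u hu =>
    le_trans (mem_closedBall_zero_iff.mp (hr0 hu)) (le_max_left _ _)
  obtain ⟨K₁, hK₁0, hK₁⟩ := exists_Eexp_bound' A η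
  set a : ℕ → ℝ := fun k => ∑ i, ∑ j, |(A ^ k) i j| with hadef
  have ha0 : ∀ k, 0 ≤ a k := fun k =>
    Finset.sum_nonneg fun _ _ => Finset.sum_nonneg fun _ _ => abs_nonneg _
  have haij : ∀ k i j, |(A ^ k) i j| ≤ a k := fun k i j => entry_le_entSum' _ i j
  set aE : ℝ := ∑ i, ∑ j, |(mexp (t • A)) i j| with haEdef
  have haE0 : 0 ≤ aE :=
    Finset.sum_nonneg fun _ _ => Finset.sum_nonneg fun _ _ => abs_nonneg _
  have haEij : ∀ i j, |(mexp (t • A)) i j| ≤ aE := fun i j => entry_le_entSum' _ i j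
  set c₂ := (∑ k ∈ Finset.range (η + 1), Real.sqrt n * ((n:ℝ) * a k * KU)) +
      Real.sqrt n * ((n:ℝ) * K₁ * KU) with hc₂def
  have hc₂0 : 0 ≤ c₂ := by
    apply add_nonneg
    · apply Finset.sum_nonneg
      intro k _
      exact mul_nonneg (Real.sqrt_nonneg _)
        (mul_nonneg (mul_nonneg (Nat.cast_nonneg _) (ha0 k)) hKU0)
    · exact mul_nonneg (Real.sqrt_nonneg _)
        (mul_nonneg (mul_nonneg (Nat.cast_nonneg _) hK₁0) hKU0)
  have hP : ∀ dt ∈ Set.Ioo (0:ℝ) 1, ∀ p ∈ PhatSet A dt η U0, ‖p‖ ≤ dt * c₂ := by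
    rintro dt ⟨hdt0, hdt1⟩ p hp
    have hdt0' : (0:ℝ) ≤ dt := le_of_lt hdt0
    rcases Set.mem_add.mp hp with ⟨y, hy, z, hz, rfl⟩
    have hy' : ‖y‖ ≤ ∑ k ∈ Finset.range (η + 1),
        dt * (Real.sqrt n * ((n:ℝ) * a k * KU)) := by
      refine norm_sum_sets_le' _ _ _ ?_ y hy
      intro k _ x hx
      rcases hx with ⟨u, hu, rfl⟩
      have hcoef : 0 ≤ dt ^ (k + 1) / (Nat.factorial (k+1) : ℝ) := by positivity
      have hcle : dt ^ (k + 1) / (Nat.factorial (k+1) : ℝ) ≤ dt := by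
        have h1 : dt ^ (k+1) ≤ dt := by
          calc dt ^ (k+1) = dt ^ k * dt := pow_succ dt k
            _ ≤ 1 * dt := mul_le_mul_of_nonneg_right
                (pow_le_one₀ hdt0' (le_of_lt hdt1)) hdt0'
            _ = dt := one_mul dt
        have h2 : (1:ℝ) ≤ (Nat.factorial (k+1) : ℝ) :=
          Nat.one_le_cast.mpr (Nat.factorial_pos _)
        calc dt ^ (k+1) / (Nat.factorial (k+1) : ℝ) ≤ dt ^ (k+1) / 1 :=
              div_le_div_of_nonneg_left (by positivity) one_pos h2
          _ = dt ^ (k+1) := div_one _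
          _ ≤ dt := h1
      have hent : ∀ i j, |Atilde A dt k i j| ≤ dt * a k := by
        intro i j
        have he : Atilde A dt k i j
            = (dt ^ (k+1) / (Nat.factorial (k+1) : ℝ)) * (A ^ k) i j := rfl
        rw [he, abs_mul, abs_of_nonneg hcoef]
        exact mul_le_mul hcle (haij k i j) (abs_nonneg _) hdt0'
      have hb := mvE_norm_le' (Atilde A dt k) u (K := dt * a k)
        (mul_nonneg hdt0' (ha0 k)) hent
      calc ‖mvE (Atilde A dt k) u‖ ≤ Real.sqrt n * ((n:ℝ) * (dt * a k) * ‖u‖) := hb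
        _ ≤ Real.sqrt n * ((n:ℝ) * (dt * a k) * KU) := by
            apply mul_le_mul_of_nonneg_left _ (Real.sqrt_nonneg _)
            exact mul_le_mul_of_nonneg_left (hKU u hu)
              (mul_nonneg (Nat.cast_nonneg _) (mul_nonneg hdt0' (ha0 k)))
        _ = dt * (Real.sqrt n * ((n:ℝ) * a k * KU)) := by ring
    have hz' : ‖z‖ ≤ dt * (Real.sqrt n * ((n:ℝ) * K₁ * KU)) := by
      rcases hz with ⟨M, hM, u, hu, rfl⟩
      rw [norm_smul, Real.norm_eq_abs, abs_of_nonneg hdt0']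
      have hent : ∀ i j, |M i j| ≤ K₁ := fun i j =>
        le_trans (hM i j) (hK₁ dt ⟨hdt0', le_of_lt hdt1⟩ i j)
      have hb := mvE_norm_le' M u hK₁0 hent
      calc dt * ‖mvE M u‖ ≤ dt * (Real.sqrt n * ((n:ℝ) * K₁ * ‖u‖)) :=
            mul_le_mul_of_nonneg_left hb hdt0'
        _ ≤ dt * (Real.sqrt n * ((n:ℝ) * K₁ * KU)) := by
            apply mul_le_mul_of_nonneg_left _ hdt0'
            apply mul_le_mul_of_nonneg_left _ (Real.sqrt_nonneg _)
            exact mul_le_mul_of_nonneg_left (hKU u hu)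
              (mul_nonneg (Nat.cast_nonneg _) hK₁0)
    calc ‖y + z‖ ≤ ‖y‖ + ‖z‖ := norm_add_le _ _
      _ ≤ (∑ k ∈ Finset.range (η+1), dt * (Real.sqrt n * ((n:ℝ) * a k * KU))) +
            dt * (Real.sqrt n * ((n:ℝ) * K₁ * KU)) := add_le_add hy' hz'
      _ = dt * c₂ := by rw [hc₂def, mul_add, Finset.mul_sum]
  set cfin := Real.sqrt n * (Real.sqrt n * ((n:ℝ) * aE * c₂)) with hcfdef
  have hcf0 : 0 ≤ cfin :=
    mul_nonneg (Real.sqrt_nonneg _) (mul_nonneg (Real.sqrt_nonneg _)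
      (mul_nonneg (mul_nonneg (Nat.cast_nonneg _) haE0) hc₂0))
  have hbound : ∀ dt ∈ Set.Ioo (0:ℝ) 1, errPhat A t η U0 dt ≤ cfin * dt := by
    rintro dt hdt
    have hdt0' : (0:ℝ) ≤ dt := le_of_lt hdt.1
    have hX : ∀ x ∈ imgM (mexp (t • A)) (PhatSet A dt η U0),
        ‖x‖ ≤ Real.sqrt n * ((n:ℝ) * aE * (dt * c₂)) := by
      rintro x ⟨p, hp, rfl⟩
      have hb := mvE_norm_le' (mexp (t • A)) p haE0 haEij
      calc ‖mvE (mexp (t • A)) p‖ ≤ Real.sqrt n * ((n:ℝ) * aE * ‖p‖) := hb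
        _ ≤ Real.sqrt n * ((n:ℝ) * aE * (dt * c₂)) := by
            apply mul_le_mul_of_nonneg_left _ (Real.sqrt_nonneg _)
            exact mul_le_mul_of_nonneg_left (hP dt hdt p hp)
              (mul_nonneg (Nat.cast_nonneg _) haE0)
    have hr' : (0:ℝ) ≤ Real.sqrt n * ((n:ℝ) * aE * (dt * c₂)) :=
      mul_nonneg (Real.sqrt_nonneg _)
        (mul_nonneg (mul_nonneg (Nat.cast_nonneg _) haE0) (mul_nonneg hdt0' hc₂0))
    have hle := err_le_of_bound' (S := imgM (mexp (t • A)) (PhatSet A dt η U0))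
      (r := Real.sqrt n * ((n:ℝ) * aE * (dt * c₂))) hr' hX
    calc errPhat A t η U0 dt
        ≤ Real.sqrt n * (Real.sqrt n * ((n:ℝ) * aE * (dt * c₂))) := hle
      _ = cfin * dt := by rw [hcfdef]; ring
  have hmem : Set.Ioo (0:ℝ) 1 ∈ nhdsWithin 0 (Set.Ioi 0) :=
    Ioo_mem_nhdsGT_of_mem ⟨le_refl 0, one_pos⟩
  constructor
  · apply squeeze_zero'
      (Filter.eventually_of_mem hmem (fun dt _ => err_nonneg' _))
      (Filter.eventually_of_mem hmem (fun dt h => hbound dt h))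
    have hg : Filter.Tendsto (fun dt : ℝ => cfin * dt) (nhdsWithin 0 (Set.Ioi 0))
        (nhds (cfin * 0)) :=
      (((continuous_id.tendsto (0:ℝ)).mono_left nhdsWithin_le_nhds).const_mul cfin)
    simpa using hg
  · exact ⟨cfin + 1, by linarith, 1, one_pos, fun dt hdt =>
      le_trans (hbound dt hdt) (by nlinarith [hdt.1])⟩
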